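/- arXiv:2312.01990 — 3 statements merged into one kernel-verified Lean document; each statement's English description precedes it below -/
import Mathlib

section
/- (Lemma 1) Let d, m ≥ 1, let r > 0, and let x, y ∈ ℝ^d with ‖x‖ = ‖y‖ = r. Let G be a random m × d matrix whose entries are i.i.d. standard normal N(0,1) random variables, with rows g_1, …, g_m, and for z ∈ ℝ^d define φ_exp^rand(z) = (exp(⟨g_1, z⟩), …, exp(⟨g_m, z⟩)) ∈ ℝ^m. Then m · exp(r²) · exp(⟨x, y⟩) equals the expectation over G of ⟨φ_exp^rand(x), φ_exp^rand(y)⟩. -/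
open MeasureTheory ProbabilityTheory Real

open scoped ENNReal NNReal

/-- Product of one-variable functions: Bochner integral over a general finite product
measure factors as a product of integrals. -/
lemma my_integral_pi_prod {ι : Type*} [Fintype ι] {E : ι → Type*}
    [∀ i, MeasurableSpace (E i)] (μ : ∀ i, Measure (E i)) [∀ i, SigmaFinite (μ i)]
    (f : ∀ i, E i → ℝ) :
    ∫ x, ∏ i, f i (x i) ∂Measure.pi μ = ∏ i, ∫ x, f i x ∂(μ i) := by
  letI : ∀ i, MeasureSpace (E i) := fun i => ⟨μ i⟩
  exact MeasureTheory.integral_fintype_prod_eq_prod f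

lemma my_integrable_pi_prod {ι : Type*} [Fintype ι] {E : ι → Type*}
    [∀ i, MeasurableSpace (E i)] (μ : ∀ i, Measure (E i)) [∀ i, SigmaFinite (μ i)]
    (f : ∀ i, E i → ℝ) (hf : ∀ i, Integrable (f i) (μ i)) :
    Integrable (fun x => ∏ i, f i (x i)) (Measure.pi μ) := by
  letI : ∀ i, MeasureSpace (E i) := fun i => ⟨μ i⟩
  exact MeasureTheory.Integrable.fintype_prod_dep hf

lemma gauss_pdf_eq (t u : ℝ) :
    gaussianPDFReal 0 1 u * rexp (t * u)
      = (Real.sqrt (2 * π))⁻¹ * rexp (t ^ 2 / 2) * rexp (-(2⁻¹ : ℝ) * (u - t) ^ 2) := by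
  rw [gaussianPDFReal_def]
  simp only [NNReal.coe_one, mul_one, sub_zero]
  rw [mul_assoc, mul_assoc, ← Real.exp_add, ← Real.exp_add]
  congr 1
  ring

lemma gauss_exp_integrable (t : ℝ) :
    Integrable (fun u => rexp (t * u)) (gaussianReal 0 1) := by
  rw [gaussianReal_of_var_ne_zero 0 one_ne_zero]
  rw [integrable_withDensity_iff (measurable_gaussianPDF 0 1)
    (Filter.Eventually.of_forall fun u => by simp [gaussianPDF_def, ENNReal.ofReal_lt_top])]
  have : (fun u => rexp (t * u) * ((gaussianPDF 0 1 u).toReal))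
      = fun u => (Real.sqrt (2 * π))⁻¹ * rexp (t ^ 2 / 2) * rexp (-(2⁻¹ : ℝ) * (u - t) ^ 2) := by
    funext u
    rw [gaussianPDF_def]
    simp only
    rw [ENNReal.toReal_ofReal (gaussianPDFReal_nonneg 0 1 u), mul_comm, gauss_pdf_eq]
  rw [this]
  exact ((integrable_exp_neg_mul_sq (by norm_num : (0:ℝ) < 2⁻¹)).comp_sub_right t).const_mul _

lemma gauss_mgf (t : ℝ) :
    ∫ u, rexp (t * u) ∂(gaussianReal 0 1) = rexp (t ^ 2 / 2) := by
  rw [gaussianReal_of_var_ne_zero 0 one_ne_zero]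
  have hmeas : Measurable fun u : ℝ => (gaussianPDFReal 0 1 u).toNNReal :=
    (measurable_gaussianPDFReal 0 1).real_toNNReal
  have hd : gaussianPDF 0 1 = fun u => ((gaussianPDFReal 0 1 u).toNNReal : ℝ≥0∞) := by
    funext u; rfl
  rw [hd, integral_withDensity_eq_integral_smul hmeas]
  have : (fun u => ((gaussianPDFReal 0 1 u).toNNReal : ℝ≥0) • rexp (t * u))
      = fun u => (Real.sqrt (2 * π))⁻¹ * rexp (t ^ 2 / 2) * rexp (-(2⁻¹ : ℝ) * (u - t) ^ 2) := by
    funext u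
    rw [NNReal.smul_def, smul_eq_mul, Real.coe_toNNReal _ (gaussianPDFReal_nonneg 0 1 u),
      gauss_pdf_eq]
  rw [this, MeasureTheory.integral_const_mul,
    integral_sub_right_eq_self (fun u => rexp (-(2⁻¹ : ℝ) * u ^ 2)) t,
    integral_gaussian, show π / (2⁻¹ : ℝ) = 2 * π by ring]
  have h2 : Real.sqrt (2 * π) ≠ 0 := by
    positivity
  field_simp

/-- The law of a random `m × d` matrix (viewed as `Fin m → Fin d → ℝ`, with rows
`G 0, …, G (m-1)`) whose `m·d` entries are i.i.d. standard normal `N(0,1)`. -/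
noncomputable def gaussianMatrix (m d : ℕ) : Measure (Fin m → Fin d → ℝ) :=
  Measure.pi fun _ => Measure.pi fun _ => gaussianReal 0 1

/-- Lemma 1 of the paper: for `x, y ∈ ℝ^d` with `‖x‖ = ‖y‖ = r`, and
`φ_exp^rand(z) = (exp(⟨g_1,z⟩), …, exp(⟨g_m,z⟩))` for a random Gaussian matrix `G`
with rows `g_1, …, g_m`, we have
`m · exp(r²) · exp(⟨x,y⟩) = 𝔼_G[⟨φ_exp^rand(x), φ_exp^rand(y)⟩]`. -/
theorem lemma1_unbiased_up_to_constant (d m : ℕ) (hd : 1 ≤ d) (hm : 1 ≤ m)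
    (r : ℝ) (hr : 0 < r) (x y : Fin d → ℝ)
    (hx : Real.sqrt (∑ i, x i ^ 2) = r) (hy : Real.sqrt (∑ i, y i ^ 2) = r) :
    (m : ℝ) * Real.exp (r ^ 2) * Real.exp (∑ i, x i * y i)
      = ∫ G, (∑ l : Fin m,
          Real.exp (∑ i, G l i * x i) * Real.exp (∑ i, G l i * y i))
          ∂(gaussianMatrix m d) := by
  set c : Fin d → ℝ := fun i => x i + y i with hc
  set ν : Measure (Fin d → ℝ) := Measure.pi fun _ => gaussianReal 0 1 with hν
  -- rewrite each summand as a product over coordinates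
  have hterm : ∀ (l : Fin m) (G : Fin m → Fin d → ℝ),
      rexp (∑ i, G l i * x i) * rexp (∑ i, G l i * y i) = ∏ i, rexp (G l i * c i) := by
    intro l G
    rw [← Real.exp_add, ← Finset.sum_add_distrib,
      Finset.sum_congr rfl (fun i _ => show G l i * x i + G l i * y i = G l i * c i by
        simp only [hc]; ring), Real.exp_sum]
  -- the inner (row) integral
  have hinner_int : Integrable (fun g : Fin d → ℝ => ∏ i, rexp (g i * c i)) ν := by
    rw [hν]
    exact my_integrable_pi_prod (fun _ : Fin d => gaussianReal 0 1)
      (fun i u => rexp (u * c i)) (fun i => by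
        simpa [mul_comm] using gauss_exp_integrable (c i))
  have hinner : ∫ g, ∏ i, rexp (g i * c i) ∂ν = rexp (∑ i, c i ^ 2 / 2) := by
    rw [hν, my_integral_pi_prod (fun _ : Fin d => gaussianReal 0 1)
      (fun i u => rexp (u * c i)), Real.exp_sum]
    exact Finset.prod_congr rfl fun i _ => by simpa [mul_comm] using gauss_mgf (c i)
  -- per-row function on the matrix, as a product over rows
  have hrow : ∀ l : Fin m, (fun G : Fin m → Fin d → ℝ => ∏ i, rexp (G l i * c i))
      = fun G => ∏ l' : Fin m,
          (if l' = l then (fun g : Fin d → ℝ => ∏ i, rexp (g i * c i)) else fun _ => 1) (G l') := by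
    intro l
    funext G
    rw [Finset.prod_congr rfl (fun l' _ => show _ = if l' = l then ∏ i, rexp (G l' i * c i) else 1
        from by by_cases h : l' = l <;> simp [h]), Finset.prod_ite_eq']
    simp
  have hrow_int : ∀ l : Fin m,
      Integrable (fun G : Fin m → Fin d → ℝ => ∏ i, rexp (G l i * c i)) (gaussianMatrix m d) := by
    intro l
    rw [hrow l]
    exact my_integrable_pi_prod (fun _ : Fin m => ν)
      (fun l' => if l' = l then (fun g : Fin d → ℝ => ∏ i, rexp (g i * c i)) else fun _ => 1)
      (fun l' => by
      by_cases h : l' = l <;> simp [h, hinner_int, integrable_const])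
  have hrow_integral : ∀ l : Fin m,
      ∫ G, ∏ i, rexp (G l i * c i) ∂(gaussianMatrix m d) = rexp (∑ i, c i ^ 2 / 2) := by
    intro l
    rw [hrow l, gaussianMatrix, my_integral_pi_prod (fun _ : Fin m => ν)
      (fun l' => if l' = l then (fun g : Fin d → ℝ => ∏ i, rexp (g i * c i)) else fun _ => 1)]
    rw [Finset.prod_congr rfl (fun l' _ =>
        show _ = if l' = l then rexp (∑ i, c i ^ 2 / 2) else 1 from by
          by_cases h : l' = l <;> simp [h, hinner, integral_one]),
      Finset.prod_ite_eq']
    simp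
  -- the sum of squares identities
  have hx2 : ∑ i, x i ^ 2 = r ^ 2 := by
    rw [← hx, Real.sq_sqrt (Finset.sum_nonneg fun i _ => sq_nonneg _)]
  have hy2 : ∑ i, y i ^ 2 = r ^ 2 := by
    rw [← hy, Real.sq_sqrt (Finset.sum_nonneg fun i _ => sq_nonneg _)]
  have hcsum : ∑ i, c i ^ 2 / 2 = r ^ 2 + ∑ i, x i * y i := by
    rw [Finset.sum_congr rfl (fun i _ =>
      show c i ^ 2 / 2 = x i ^ 2 / 2 + y i ^ 2 / 2 + x i * y i from by simp only [hc]; ring),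
      Finset.sum_add_distrib, Finset.sum_add_distrib, ← Finset.sum_div, ← Finset.sum_div,
      hx2, hy2]
    ring
  calc (m : ℝ) * Real.exp (r ^ 2) * Real.exp (∑ i, x i * y i)
      = ∑ _l : Fin m, rexp (∑ i, c i ^ 2 / 2) := by
        rw [hcsum, Real.exp_add]
        simp [Finset.sum_const, Finset.card_univ, mul_assoc]
    _ = ∑ l : Fin m, ∫ G, ∏ i, rexp (G l i * c i) ∂(gaussianMatrix m d) := by
        exact (Finset.sum_congr rfl fun l _ => (hrow_integral l).symm)
    _ = ∫ G, ∑ l : Fin m, ∏ i, rexp (G l i * c i) ∂(gaussianMatrix m d) := by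
        exact (integral_finset_sum _ (fun l _ => hrow_int l)).symm
    _ = ∫ G, (∑ l : Fin m,
          Real.exp (∑ i, G l i * x i) * Real.exp (∑ i, G l i * y i)) ∂(gaussianMatrix m d) := by
        congr 1
        funext G
        exact Finset.sum_congr rfl fun l _ => (hterm l G).symm
end

section
/- Let d, m ≥ 1, let r > 0, and let x, y ∈ ℝ^d with ‖x‖ = ‖y‖ = r, and let θ be the angle between x and y, i.e. cos(θ) = ⟨x,y⟩/r². Let G be a random m × d matrix whose entries are i.i.d. standard normal N(0,1) random variables, with rows g_1, …, g_m, and for z ∈ ℝ^d define φ_exp^rand(z) = (exp(⟨g_1, z⟩), …, exp(⟨g_m, z⟩)) ∈ ℝ^m. Then the variance over G of the normalized estimator ⟨φ_exp^rand(x), φ_exp^rand(y)⟩ / (m · exp(r²)) equals (1/m) · exp(2r²(2cos(θ) + 1)) · (1 − exp(−2r²(1 + cos(θ)))). -/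
open MeasureTheory ProbabilityTheory Real
open scoped ENNReal NNReal

lemma my_pi_integral_prod {ι E : Type*} [Fintype ι] [MeasurableSpace E]
    (μ : Measure E) [SigmaFinite μ] (f : ι → E → ℝ) :
    ∫ x : ι → E, ∏ i, f i (x i) ∂(Measure.pi fun _ => μ) = ∏ i, ∫ t, f i t ∂μ := by
  letI : MeasureSpace E := ⟨μ⟩
  haveI : SigmaFinite (volume : Measure E) := ‹SigmaFinite μ›
  exact MeasureTheory.integral_fintype_prod_eq_prod (fun i => f i)

lemma my_pi_integrable_prod {ι E : Type*} [Fintype ι] [MeasurableSpace E]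
    (μ : Measure E) [SigmaFinite μ] (f : ι → E → ℝ) (hf : ∀ i, Integrable (f i) μ) :
    Integrable (fun x : ι → E => ∏ i, f i (x i)) (Measure.pi fun _ => μ) := by
  letI : MeasureSpace E := ⟨μ⟩
  haveI : SigmaFinite (volume : Measure E) := ‹SigmaFinite μ›
  exact MeasureTheory.Integrable.fintype_prod hf

lemma my_pdf_mul (c t : ℝ) :
    Real.exp (t * c) * gaussianPDFReal 0 1 t = Real.exp (c ^ 2 / 2) * gaussianPDFReal c 1 t := by
  simp only [gaussianPDFReal, sub_zero, NNReal.coe_one, mul_one]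
  have h : rexp (t * c) * rexp (-t ^ 2 / 2) = rexp (c ^ 2 / 2) * rexp (-(t - c) ^ 2 / 2) := by
    rw [← Real.exp_add, ← Real.exp_add]; congr 1; ring
  linear_combination (√(2 * π))⁻¹ * h

lemma my_int_exp (c : ℝ) :
    ∫ t, Real.exp (t * c) ∂(gaussianReal 0 1) = Real.exp (c ^ 2 / 2) := by
  rw [gaussianReal_of_var_ne_zero 0 one_ne_zero,
    show gaussianPDF 0 1 = fun t => ((gaussianPDFReal 0 1 t).toNNReal : ℝ≥0∞) from rfl,
    integral_withDensity_eq_integral_smul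
      ((measurable_gaussianPDFReal 0 1).real_toNNReal) (fun t => rexp (t * c))]
  have : ∀ t : ℝ, (gaussianPDFReal 0 1 t).toNNReal • rexp (t * c)
      = rexp (c ^ 2 / 2) * gaussianPDFReal c 1 t := by
    intro t
    rw [NNReal.smul_def, Real.coe_toNNReal _ (gaussianPDFReal_nonneg 0 1 t), smul_eq_mul,
      mul_comm, my_pdf_mul]
  simp_rw [this]
  rw [integral_const_mul, integral_gaussianPDFReal_eq_one c one_ne_zero, mul_one]

lemma my_integrable_exp (c : ℝ) :
    Integrable (fun t => Real.exp (t * c)) (gaussianReal 0 1) := by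
  rw [gaussianReal_of_var_ne_zero 0 one_ne_zero,
    show gaussianPDF 0 1 = fun t => ((gaussianPDFReal 0 1 t).toNNReal : ℝ≥0∞) from rfl]
  refine (integrable_withDensity_iff_integrable_smul (E := ℝ)
      ((measurable_gaussianPDFReal 0 1).real_toNNReal)).2 ?_
  have : ∀ t : ℝ, (gaussianPDFReal 0 1 t).toNNReal • rexp (t * c)
      = rexp (c ^ 2 / 2) * gaussianPDFReal c 1 t := by
    intro t
    rw [NNReal.smul_def, Real.coe_toNNReal _ (gaussianPDFReal_nonneg 0 1 t), smul_eq_mul,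
      mul_comm, my_pdf_mul]
  exact (((integrable_gaussianPDFReal c 1).const_mul _).congr
    (Filter.Eventually.of_forall fun t => (this t).symm))

lemma my_int_exp_dot {d : ℕ} (z : Fin d → ℝ) :
    ∫ g : Fin d → ℝ, Real.exp (∑ i, g i * z i) ∂(Measure.pi fun _ => gaussianReal 0 1)
      = Real.exp ((∑ i, z i ^ 2) / 2) := by
  simp_rw [Real.exp_sum]
  rw [my_pi_integral_prod (gaussianReal 0 1) (fun i t => rexp (t * z i))]
  simp_rw [my_int_exp]
  rw [← Real.exp_sum, Finset.sum_div]

lemma my_integrable_exp_dot {d : ℕ} (z : Fin d → ℝ) :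
    Integrable (fun g : Fin d → ℝ => Real.exp (∑ i, g i * z i))
      (Measure.pi fun _ => gaussianReal 0 1) := by
  simp_rw [Real.exp_sum]
  exact my_pi_integrable_prod (gaussianReal 0 1) (fun i t => rexp (t * z i))
    (fun i => my_integrable_exp (z i))

section eval
variable {ι E : Type*} [Fintype ι] [DecidableEq ι] [MeasurableSpace E]
  (μ : Measure E) [IsProbabilityMeasure μ]

lemma my_prod_one {ι : Type*} [Fintype ι] [DecidableEq ι] (a : ι → ℝ) (l : ι) :
    (∏ k, (if k = l then a k else 1)) = a l := by
  simp [Finset.prod_ite_eq' Finset.univ l a]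

lemma my_prod_two {ι : Type*} [Fintype ι] [DecidableEq ι] (a b : ι → ℝ) (l l' : ι)
    (h : l ≠ l') :
    (∏ k, (if k = l then a k else if k = l' then b k else 1)) = a l * b l' := by
  rw [← Finset.mul_prod_erase Finset.univ _ (Finset.mem_univ l),
    ← Finset.mul_prod_erase _ _ (Finset.mem_erase.2 ⟨Ne.symm h, Finset.mem_univ l'⟩),
    Finset.prod_eq_one]
  · simp [h, Ne.symm h]
  · intro k hk
    simp only [Finset.mem_erase] at hk
    simp [hk.1, hk.2.1]

lemma my_integral_eval (f : E → ℝ) (l : ι) :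
    ∫ x : ι → E, f (x l) ∂(Measure.pi fun _ => μ) = ∫ t, f t ∂μ := by
  have e1 : ∫ x : ι → E, (∏ k, if k = l then f (x k) else 1) ∂(Measure.pi fun _ => μ)
      = ∏ k, ∫ t, (if k = l then f t else 1) ∂μ :=
    my_pi_integral_prod μ (fun k t => if k = l then f t else 1)
  calc ∫ x : ι → E, f (x l) ∂(Measure.pi fun _ => μ)
      = ∫ x : ι → E, (∏ k, if k = l then f (x k) else 1) ∂(Measure.pi fun _ => μ) :=
        integral_congr_ae (Filter.Eventually.of_forall fun x =>
          (my_prod_one (fun k => f (x k)) l).symm)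
    _ = ∏ k, ∫ t, (if k = l then f t else 1) ∂μ := e1
    _ = ∏ k, (if k = l then ∫ t, f t ∂μ else 1) := by
        refine Finset.prod_congr rfl fun k _ => ?_
        by_cases h : k = l <;> simp [h]
    _ = ∫ t, f t ∂μ := my_prod_one (fun _ => ∫ t, f t ∂μ) l

lemma my_integrable_eval (f : E → ℝ) (hf : Integrable f μ) (l : ι) :
    Integrable (fun x : ι → E => f (x l)) (Measure.pi fun _ => μ) := by
  refine (my_pi_integrable_prod μ (fun k t => if k = l then f t else 1)
    (fun k => ?_)).congr (Filter.Eventually.of_forall fun x => ?_)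
  · by_cases h : k = l <;> simp [h, hf]
  · exact my_prod_one (fun k => f (x k)) l

lemma my_integral_eval_two (f g : E → ℝ) (l l' : ι) (h : l ≠ l') :
    ∫ x : ι → E, f (x l) * g (x l') ∂(Measure.pi fun _ => μ)
      = (∫ t, f t ∂μ) * ∫ t, g t ∂μ := by
  have e1 : ∫ x : ι → E, (∏ k, if k = l then f (x k) else if k = l' then g (x k) else 1)
        ∂(Measure.pi fun _ => μ)
      = ∏ k, ∫ t, (if k = l then f t else if k = l' then g t else 1) ∂μ :=
    my_pi_integral_prod μ (fun k t => if k = l then f t else if k = l' then g t else 1)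
  calc ∫ x : ι → E, f (x l) * g (x l') ∂(Measure.pi fun _ => μ)
      = ∫ x : ι → E, (∏ k, if k = l then f (x k) else if k = l' then g (x k) else 1)
          ∂(Measure.pi fun _ => μ) :=
        integral_congr_ae (Filter.Eventually.of_forall fun x =>
          (my_prod_two (fun k => f (x k)) (fun k => g (x k)) l l' h).symm)
    _ = ∏ k, ∫ t, (if k = l then f t else if k = l' then g t else 1) ∂μ := e1
    _ = ∏ k, (if k = l then ∫ t, f t ∂μ else if k = l' then ∫ t, g t ∂μ else 1) := by
        refine Finset.prod_congr rfl fun k _ => ?_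
        by_cases hk : k = l
        · simp [hk]
        · by_cases hk' : k = l' <;> simp [hk, hk', Ne.symm h]
    _ = (∫ t, f t ∂μ) * ∫ t, g t ∂μ :=
        my_prod_two (fun _ => ∫ t, f t ∂μ) (fun _ => ∫ t, g t ∂μ) l l' h

lemma my_integrable_eval_two (f g : E → ℝ) (hf : Integrable f μ) (hg : Integrable g μ)
    (l l' : ι) (h : l ≠ l') :
    Integrable (fun x : ι → E => f (x l) * g (x l')) (Measure.pi fun _ => μ) := by
  refine (my_pi_integrable_prod μ (fun k t => if k = l then f t else if k = l' then g t else 1)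
    (fun k => ?_)).congr (Filter.Eventually.of_forall fun x => ?_)
  · by_cases hk : k = l
    · simp [hk, hf]
    · by_cases hk' : k = l' <;> simp [hk, hk', Ne.symm h, hg]
  · exact my_prod_two (fun k => f (x k)) (fun k => g (x k)) l l' h

end eval


/-- For `x, y ∈ ℝ^d` with `‖x‖ = ‖y‖ = r` and angle `θ` between them
(`cos θ = ⟨x,y⟩ / r²`), the variance over the Gaussian matrix `G` of the
normalized estimator `⟨φ_exp^rand(x), φ_exp^rand(y)⟩ / (m·exp(r²))`, where
`φ_exp^rand(z) = (exp(⟨g_1,z⟩), …, exp(⟨g_m,z⟩))`, equals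
`(1/m)·exp(2r²(2cos θ + 1))·(1 - exp(-2r²(1 + cos θ)))`. -/
theorem normalized_estimator_variance (d m : ℕ) (hd : 1 ≤ d) (hm : 1 ≤ m)
    (r : ℝ) (hr : 0 < r) (x y : Fin d → ℝ)
    (hx : Real.sqrt (∑ i, x i ^ 2) = r) (hy : Real.sqrt (∑ i, y i ^ 2) = r)
    (θ : ℝ) (hθ : Real.cos θ = (∑ i, x i * y i) / r ^ 2) :
    ProbabilityTheory.variance
      (fun G => (∑ l : Fin m,
          Real.exp (∑ i, G l i * x i) * Real.exp (∑ i, G l i * y i))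
        / (m * Real.exp (r ^ 2)))
      (gaussianMatrix m d)
      = (1 / m) * Real.exp (2 * r ^ 2 * (2 * Real.cos θ + 1))
        * (1 - Real.exp (-(2 * r ^ 2 * (1 + Real.cos θ)))) := by
  classical
  set ν : Measure (Fin d → ℝ) := Measure.pi fun _ => gaussianReal 0 1 with hν
  have hMeq : gaussianMatrix m d = Measure.pi fun _ : Fin m => ν := rfl
  haveI : IsProbabilityMeasure ν := by rw [hν]; infer_instance
  haveI : IsProbabilityMeasure (gaussianMatrix m d) := by rw [hMeq]; infer_instance
  set f : (Fin d → ℝ) → ℝ := fun g => Real.exp (∑ i, g i * (x i + y i)) with hfdef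
  set s : ℝ := ∑ i, (x i + y i) ^ 2 with hsdef
  -- basic one-row facts
  have hint1 : ∫ g, f g ∂ν = Real.exp (s / 2) := my_int_exp_dot (fun i => x i + y i)
  have hf_int : Integrable f ν := my_integrable_exp_dot (fun i => x i + y i)
  have hf_sq : ∀ g, f g * f g = Real.exp (∑ i, g i * (2 * (x i + y i))) := by
    intro g
    rw [hfdef, ← Real.exp_add, ← Finset.sum_add_distrib]
    exact congrArg Real.exp (Finset.sum_congr rfl fun i _ => by ring)
  have hint2 : ∫ g, f g * f g ∂ν = Real.exp (2 * s) := by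
    simp_rw [hf_sq]
    rw [my_int_exp_dot (fun i => 2 * (x i + y i))]
    congr 1
    have h4 : (∑ i, (2 * (x i + y i)) ^ 2) = 4 * s := by
      rw [hsdef, Finset.mul_sum]
      exact Finset.sum_congr rfl fun i _ => by ring
    rw [h4]; ring
  have hf2_int : Integrable (fun g => f g * f g) ν :=
    (my_integrable_exp_dot (fun i => 2 * (x i + y i))).congr
      (Filter.Eventually.of_forall fun g => (hf_sq g).symm)
  have hf_meas : Measurable f := by
    apply Measurable.exp
    exact Finset.measurable_sum _ fun i _ => (measurable_pi_apply i).mul_const _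
  -- rewrite the estimator
  have hXeq : (fun G : Fin m → Fin d → ℝ =>
        (∑ l : Fin m, Real.exp (∑ i, G l i * x i) * Real.exp (∑ i, G l i * y i))
          / (m * Real.exp (r ^ 2)))
      = fun G => ((m : ℝ) * Real.exp (r ^ 2))⁻¹ * ∑ l : Fin m, f (G l) := by
    funext G
    rw [div_eq_inv_mul]
    congr 1
    refine Finset.sum_congr rfl fun l _ => ?_
    rw [← Real.exp_add, ← Finset.sum_add_distrib, hfdef]
    exact congrArg Real.exp (Finset.sum_congr rfl fun i _ => by ring)
  rw [hXeq, variance_const_mul]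
  -- Memℒp of the sum
  have hml : MemLp (fun G : Fin m → Fin d → ℝ => ∑ l : Fin m, f (G l)) 2 (gaussianMatrix m d) := by
    rw [hMeq]
    refine memLp_finsetSum (f := fun (l : Fin m) (G : Fin m → Fin d → ℝ) => f (G l))
      Finset.univ fun l _ => ?_
    refine (memLp_two_iff_integrable_sq
      ((hf_meas.comp (measurable_pi_apply l)).aestronglyMeasurable)).2 ?_
    have := my_integrable_eval ν (fun g => f g * f g) hf2_int l
    exact this.congr (Filter.Eventually.of_forall fun G => by simp [pow_two])
  rw [variance_eq_sub hml]
  -- first moment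
  have hE1 : (∫ G, (∑ l : Fin m, f (G l)) ∂(gaussianMatrix m d)) = m * Real.exp (s / 2) := by
    rw [hMeq, integral_finset_sum _ (fun l _ => my_integrable_eval ν f hf_int l)]
    rw [Finset.sum_congr rfl fun l _ => my_integral_eval ν f l, hint1, Finset.sum_const, Finset.card_univ, Fintype.card_fin, nsmul_eq_mul]
  -- second moment
  have hE2 : (∫ G, (∑ l : Fin m, f (G l)) ^ 2 ∂(gaussianMatrix m d))
      = m * Real.exp (2 * s) + ((m : ℝ) ^ 2 - m) * (Real.exp (s / 2) * Real.exp (s / 2)) := by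
    have hsq : ∀ G : Fin m → Fin d → ℝ,
        (∑ l : Fin m, f (G l)) ^ 2 = ∑ l : Fin m, ∑ l' : Fin m, f (G l) * f (G l') := by
      intro G; rw [pow_two, Finset.sum_mul_sum]
    simp_rw [hsq]
    have hterm_int : ∀ l l' : Fin m,
        Integrable (fun G : Fin m → Fin d → ℝ => f (G l) * f (G l'))
          (Measure.pi fun _ : Fin m => ν) := by
      intro l l'
      by_cases h : l = l'
      · subst h
        exact my_integrable_eval ν (fun g => f g * f g) hf2_int l
      · exact my_integrable_eval_two ν f f hf_int hf_int l l' h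
    rw [hMeq, integral_finset_sum _ (fun l _ => integrable_finset_sum _ (fun l' _ => hterm_int l l'))]
    have hterm_val : ∀ l l' : Fin m,
        (∫ G, f (G l) * f (G l') ∂(Measure.pi fun _ : Fin m => ν))
          = if l = l' then Real.exp (2 * s) else Real.exp (s / 2) * Real.exp (s / 2) := by
      intro l l'
      by_cases h : l = l'
      · subst h
        rw [if_pos rfl]
        calc (∫ G, f (G l) * f (G l) ∂(Measure.pi fun _ : Fin m => ν))
            = ∫ g, f g * f g ∂ν := my_integral_eval ν (fun g => f g * f g) l
          _ = Real.exp (2 * s) := hint2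
      · rw [if_neg h, my_integral_eval_two ν f f l l' h, hint1]
    have hsum : ∀ l : Fin m, (∑ l' : Fin m, ∫ G, f (G l) * f (G l') ∂(Measure.pi fun _ : Fin m => ν))
        = Real.exp (2 * s) + ((m : ℝ) - 1) * (Real.exp (s / 2) * Real.exp (s / 2)) := by
      intro l
      rw [Finset.sum_congr rfl fun l' _ => hterm_val l l']
      calc (∑ l' : Fin m, if l = l' then Real.exp (2 * s) else Real.exp (s / 2) * Real.exp (s / 2))
          = ∑ l' : Fin m, (Real.exp (s / 2) * Real.exp (s / 2)
              + if l = l' then Real.exp (2 * s) - Real.exp (s / 2) * Real.exp (s / 2) else 0) :=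
            Finset.sum_congr rfl fun l' _ => by by_cases h : l = l' <;> simp [h]
        _ = m * (Real.exp (s / 2) * Real.exp (s / 2))
              + (Real.exp (2 * s) - Real.exp (s / 2) * Real.exp (s / 2)) := by
            rw [Finset.sum_add_distrib, Finset.sum_const, Finset.card_univ, Fintype.card_fin,
              nsmul_eq_mul, Finset.sum_ite_eq]
            simp
        _ = Real.exp (2 * s) + ((m : ℝ) - 1) * (Real.exp (s / 2) * Real.exp (s / 2)) := by ring
    rw [Finset.sum_congr rfl fun l _ =>
        integral_finset_sum Finset.univ (fun l' _ => hterm_int l l'),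
      Finset.sum_congr rfl fun l _ => hsum l, Finset.sum_const, Finset.card_univ,
      Fintype.card_fin, nsmul_eq_mul]
    ring
  simp only [Pi.pow_apply]
  rw [hE2, hE1]
  -- geometric facts
  have hm0 : (m : ℝ) ≠ 0 := Nat.cast_ne_zero.2 (by omega)
  have hr0 : r ≠ 0 := ne_of_gt hr
  have hx2 : (∑ i, x i ^ 2) = r ^ 2 := by
    rw [← hx, Real.sq_sqrt (Finset.sum_nonneg fun i _ => sq_nonneg _)]
  have hy2 : (∑ i, y i ^ 2) = r ^ 2 := by
    rw [← hy, Real.sq_sqrt (Finset.sum_nonneg fun i _ => sq_nonneg _)]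
  have hxy : (∑ i, x i * y i) = r ^ 2 * Real.cos θ := by
    rw [hθ]; field_simp
  have hs : s = 2 * r ^ 2 * (1 + Real.cos θ) := by
    rw [hsdef]
    have h : ∀ i, (x i + y i) ^ 2 = x i ^ 2 + y i ^ 2 + 2 * (x i * y i) := fun i => by ring
    rw [Finset.sum_congr rfl fun i _ => h i, Finset.sum_add_distrib, Finset.sum_add_distrib,
      hx2, hy2, ← Finset.mul_sum, hxy]
    ring
  rw [hs]
  -- final exponential algebra
  set c := Real.cos θ
  set a := Real.exp (r ^ 2) with hadef
  have ha0 : a ≠ 0 := Real.exp_ne_zero _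
  set b := Real.exp (r ^ 2 * c) with hbdef
  have hb0 : b ≠ 0 := Real.exp_ne_zero _
  have e1 : Real.exp (2 * (2 * r ^ 2 * (1 + c))) = a ^ 4 * b ^ 4 := by
    rw [hadef, hbdef, ← Real.exp_nat_mul, ← Real.exp_nat_mul, ← Real.exp_add]
    congr 1; push_cast; ring
  have e2 : Real.exp (2 * r ^ 2 * (1 + c) / 2) = a * b := by
    rw [hadef, hbdef, ← Real.exp_add]; congr 1; ring
  have e3 : Real.exp (2 * r ^ 2 * (2 * c + 1)) = a ^ 2 * b ^ 4 := by
    rw [hadef, hbdef, ← Real.exp_nat_mul, ← Real.exp_nat_mul, ← Real.exp_add]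
    congr 1; push_cast; ring
  have e4 : Real.exp (-(2 * r ^ 2 * (1 + c))) = (a ^ 2 * b ^ 2)⁻¹ := by
    rw [hadef, hbdef, Real.exp_neg, ← Real.exp_nat_mul, ← Real.exp_nat_mul, ← Real.exp_add]
    congr 2; push_cast; ring
  rw [e1, e2, e3, e4]
  field_simp
  ring
end

section
/- Let d, m ≥ 1, let A < 0 be a real number, let r > 0, and let q, k ∈ ℝ^d with ‖q‖ = ‖k‖ = r. Let G be a random m × d matrix whose entries are i.i.d. standard normal N(0,1) random variables, with rows g_1, …, g_m, and define v ∈ ℝ^m by v_i = (1 − 4A)^(d/4) · exp(A‖g_i‖²). Define the feature maps φ₁(z) = v ⊙ exp(√(1 − 4A)·Gz) and φ₂(z) = v ⊙ exp(√(1 − 4A)·Gz), where exp is applied entrywise and ⊙ is the entrywise (Hadamard) product. Then the expectation over G of ⟨φ₁(q), φ₂(k)⟩ / (m · exp(r²)) equals exp(⟨q, k⟩). -/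
set_option maxHeartbeats 1000000

open MeasureTheory ProbabilityTheory Real
open scoped ENNReal NNReal

section AuxLemmas

lemma integrable_rexp_quadratic {b : ℝ} (hb : b < 0) (c : ℝ) :
    Integrable fun x : ℝ => rexp (b * x ^ 2 + c * x) := by
  have h := (integrable_cexp_quadratic' (b := (b : ℂ)) (by simpa using hb) c 0).re
  refine h.congr (Filter.Eventually.of_forall fun x => ?_)
  simp [← Complex.ofReal_pow, ← Complex.ofReal_mul, ← Complex.ofReal_add,
    Complex.exp_ofReal_re]

lemma integral_rexp_quadratic {b : ℝ} (hb : b < 0) (c : ℝ) :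
    ∫ x : ℝ, rexp (b * x ^ 2 + c * x) = (π / -b) ^ ((1:ℝ)/2) * rexp (-c ^ 2 / (4 * b)) := by
  have h := integral_cexp_quadratic (b := (b : ℂ)) (by simpa using hb) c 0
  have h1 : ∀ x : ℝ, Complex.exp ((b:ℂ) * (x:ℂ) ^ 2 + (c:ℂ) * (x:ℂ) + 0)
      = ((rexp (b * x ^ 2 + c * x) : ℝ) : ℂ) := by
    intro x; push_cast; rw [add_zero]
  simp_rw [h1] at h
  have h0 : (∫ x : ℝ, ((rexp (b * x ^ 2 + c * x) : ℝ) : ℂ))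
      = ((∫ x : ℝ, rexp (b * x ^ 2 + c * x) : ℝ) : ℂ) := integral_ofReal
  rw [h0] at h
  have hpb : (0:ℝ) ≤ π / -b := div_nonneg pi_pos.le (by linarith)
  have h2 : ((π:ℂ) / -(b:ℂ)) ^ ((1:ℂ)/2) = (((π / -b) ^ ((1:ℝ)/2) : ℝ) : ℂ) := by
    rw [show ((π:ℂ) / -(b:ℂ)) = ((π / -b : ℝ) : ℂ) by push_cast; ring,
      show ((1:ℂ)/2) = (((1:ℝ)/2 : ℝ) : ℂ) by norm_num,
      ← Complex.ofReal_cpow hpb]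
  have h3 : Complex.exp (0 - (c:ℂ)^2 / (4 * (b:ℂ))) = ((rexp (-c ^ 2 / (4 * b)) : ℝ) : ℂ) := by
    push_cast; ring_nf
  rw [h3, h2, ← Complex.ofReal_mul] at h
  exact_mod_cast h

lemma gaussianReal_eq_withDensity :
    gaussianReal 0 1 = MeasureTheory.volume.withDensity
      (fun x => ((Real.toNNReal (gaussianPDFReal 0 1 x) : ℝ≥0) : ℝ≥0∞)) := by
  rw [gaussianReal_of_var_ne_zero 0 one_ne_zero]
  rfl

lemma meas_toNNReal_pdf : Measurable fun x => Real.toNNReal (gaussianPDFReal 0 1 x) :=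
  (measurable_gaussianPDFReal 0 1).real_toNNReal

lemma pdf_smul_eq {a c : ℝ} :
    ∀ x : ℝ, (Real.toNNReal (gaussianPDFReal 0 1 x) : ℝ) • rexp (a * x ^ 2 + c * x)
      = (Real.sqrt (2 * π))⁻¹ * rexp ((a - 1/2) * x ^ 2 + c * x) := by
  intro x
  rw [smul_eq_mul, Real.coe_toNNReal _ (gaussianPDFReal_nonneg 0 1 x)]
  unfold gaussianPDFReal
  simp only [NNReal.coe_one, mul_one, sub_zero]
  rw [mul_assoc, ← Real.exp_add]
  congr 2
  ring

lemma pdf_smul_eq' {a c : ℝ} :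
    ∀ x : ℝ, (Real.toNNReal (gaussianPDFReal 0 1 x)) • rexp (a * x ^ 2 + c * x)
      = (Real.sqrt (2 * π))⁻¹ * rexp ((a - 1/2) * x ^ 2 + c * x) := fun x => by
  rw [NNReal.smul_def]; exact pdf_smul_eq x

lemma integrable_exp_quad_gaussian {a : ℝ} (ha : a < 0) (c : ℝ) :
    Integrable (fun x => rexp (a * x ^ 2 + c * x)) (gaussianReal 0 1) := by
  rw [gaussianReal_eq_withDensity,
    integrable_withDensity_iff_integrable_coe_smul meas_toNNReal_pdf]
  simp_rw [pdf_smul_eq]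
  exact (integrable_rexp_quadratic (by linarith) c).const_mul _

lemma integral_exp_quad_gaussian {a : ℝ} (ha : a < 0) (c : ℝ) :
    ∫ x, rexp (a * x ^ 2 + c * x) ∂(gaussianReal 0 1)
      = (1 - 2*a) ^ (-(1:ℝ)/2) * rexp (c ^ 2 / (2 * (1 - 2*a))) := by
  rw [gaussianReal_eq_withDensity,
    integral_withDensity_eq_integral_smul meas_toNNReal_pdf]
  simp_rw [pdf_smul_eq']
  rw [integral_const_mul, integral_rexp_quadratic (by linarith) c]
  have h1 : -c ^ 2 / (4 * (a - 1/2)) = c ^ 2 / (2 * (1 - 2*a)) := by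
    rw [div_eq_div_iff (by linarith) (by linarith)]; ring
  rw [h1]
  have hπ : (0:ℝ) < 2 * π := by positivity
  have hb2 : (0:ℝ) < 1 - 2 * a := by linarith
  have h2 : (Real.sqrt (2 * π))⁻¹ * (π / -(a - 1/2)) ^ ((1:ℝ)/2) = (1 - 2*a) ^ (-(1:ℝ)/2) := by
    have e1 : π / -(a - 1/2) = (2*π) / (1 - 2*a) := by
      rw [div_eq_div_iff (by linarith) (by linarith)]; ring
    rw [Real.sqrt_eq_rpow, e1, Real.div_rpow hπ.le hb2.le,
      show (-(1:ℝ)/2) = -((1:ℝ)/2) by norm_num, Real.rpow_neg hb2.le]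
    rw [← mul_div_assoc, inv_mul_cancel₀ (by positivity : ((2*π):ℝ) ^ ((1:ℝ)/2) ≠ 0), one_div]
  rw [← mul_assoc, h2]

lemma integral_pi_prod {ι : Type*} [Fintype ι] {E : Type*} [MeasurableSpace E]
    (μ : Measure E) [SigmaFinite μ] (f : ι → E → ℝ) :
    ∫ x : ι → E, ∏ i, f i (x i) ∂(Measure.pi fun _ => μ) = ∏ i, ∫ x, f i x ∂μ := by
  letI : MeasureSpace E := { volume := μ }
  exact MeasureTheory.integral_fintype_prod_eq_prod f

lemma integrable_pi_prod {ι : Type*} [Fintype ι] {E : Type*} [MeasurableSpace E]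
    (μ : Measure E) [SigmaFinite μ] {f : ι → E → ℝ} (hf : ∀ i, Integrable (f i) μ) :
    Integrable (fun x : ι → E => ∏ i, f i (x i)) (Measure.pi fun _ => μ) := by
  letI : MeasureSpace E := { volume := μ }
  exact MeasureTheory.Integrable.fintype_prod hf

end AuxLemmas

/-- Unbiasedness of the SARA estimator with `f = exp`: for `A < 0`,
`q, k ∈ ℝ^d` with `‖q‖ = ‖k‖ = r`, `v_i = (1-4A)^(d/4)·exp(A‖g_i‖²)`, and
feature maps `φ₁(z) = φ₂(z) = v ⊙ exp(√(1-4A)·Gz)` (entrywise `exp`, Hadamard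
product `⊙`), the expectation over the Gaussian matrix `G` of
`⟨φ₁(q), φ₂(k)⟩ / (m·exp(r²))` equals `exp(⟨q,k⟩)`. -/
theorem sara_estimator_unbiased (d m : ℕ) (hd : 1 ≤ d) (hm : 1 ≤ m)
    (A : ℝ) (hA : A < 0) (r : ℝ) (hr : 0 < r) (q k : Fin d → ℝ)
    (hq : Real.sqrt (∑ i, q i ^ 2) = r) (hk : Real.sqrt (∑ i, k i ^ 2) = r) :
    ∫ G, (∑ l : Fin m,
        (((1 - 4 * A) ^ ((d : ℝ) / 4) * Real.exp (A * ∑ i, (G l i) ^ 2))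
            * Real.exp (Real.sqrt (1 - 4 * A) * ∑ i, G l i * q i))
        * (((1 - 4 * A) ^ ((d : ℝ) / 4) * Real.exp (A * ∑ i, (G l i) ^ 2))
            * Real.exp (Real.sqrt (1 - 4 * A) * ∑ i, G l i * k i)))
        / (m * Real.exp (r ^ 2)) ∂(gaussianMatrix m d)
      = Real.exp (∑ i, q i * k i) := by
  have hB : (0:ℝ) < 1 - 4 * A := by linarith
  have hs2 : Real.sqrt (1 - 4 * A) ^ 2 = 1 - 4 * A := Real.sq_sqrt hB.le
  set s : ℝ := Real.sqrt (1 - 4 * A) with hs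
  set C : ℝ := (1 - 4 * A) ^ ((d : ℝ) / 4) with hC
  set h : Fin d → ℝ → ℝ := fun i x => rexp (2 * A * x ^ 2 + s * (q i + k i) * x) with hh
  set ν : Measure (Fin d → ℝ) := Measure.pi fun _ => gaussianReal 0 1 with hν
  have hPν : IsProbabilityMeasure ν := by rw [hν]; infer_instance
  -- rewrite integrand rows into product form
  have key : ∀ G : Fin m → Fin d → ℝ, ∀ l : Fin m,
      ((C * rexp (A * ∑ i, (G l i) ^ 2)) * rexp (s * ∑ i, G l i * q i))
        * ((C * rexp (A * ∑ i, (G l i) ^ 2)) * rexp (s * ∑ i, G l i * k i))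
      = C ^ 2 * ∏ i, h i (G l i) := by
    intro G l
    have hsum : ∑ i, (2 * A * (G l i) ^ 2 + s * (q i + k i) * (G l i))
        = (A * ∑ i, (G l i) ^ 2) + (s * ∑ i, G l i * q i)
          + ((A * ∑ i, (G l i) ^ 2) + (s * ∑ i, G l i * k i)) := by
      rw [Finset.mul_sum, Finset.mul_sum, Finset.mul_sum, ← Finset.sum_add_distrib,
        ← Finset.sum_add_distrib, ← Finset.sum_add_distrib]
      exact Finset.sum_congr rfl fun i _ => by ring
    calc ((C * rexp (A * ∑ i, (G l i) ^ 2)) * rexp (s * ∑ i, G l i * q i))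
        * ((C * rexp (A * ∑ i, (G l i) ^ 2)) * rexp (s * ∑ i, G l i * k i))
        = C ^ 2 * rexp ((A * ∑ i, (G l i) ^ 2) + (s * ∑ i, G l i * q i)
          + ((A * ∑ i, (G l i) ^ 2) + (s * ∑ i, G l i * k i))) := by
          rw [Real.exp_add, Real.exp_add, Real.exp_add]; ring
      _ = C ^ 2 * ∏ i, h i (G l i) := by rw [← hsum, Real.exp_sum]
  -- integrability of each h i
  have hint : ∀ i, Integrable (h i) (gaussianReal 0 1) := fun i =>
    integrable_exp_quad_gaussian (by linarith) _
  -- row integrability over ν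
  have hrowInt : Integrable (fun g : Fin d → ℝ => ∏ i, h i (g i)) ν :=
    integrable_pi_prod _ hint
  -- value of each one-dimensional integral
  have hone : ∀ i, ∫ x, h i x ∂(gaussianReal 0 1)
      = (1 - 4*A) ^ (-(1:ℝ)/2) * rexp ((q i + k i) ^ 2 / 2) := by
    intro i
    rw [hh]
    rw [integral_exp_quad_gaussian (by linarith : 2*A < 0)]
    have e1 : 1 - 2 * (2 * A) = 1 - 4 * A := by ring
    rw [e1]
    congr 1
    rw [mul_pow, hs2]
    field_simp
  -- row integral value
  have hq2 : ∑ i, q i ^ 2 = r ^ 2 := by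
    rw [← hq, Real.sq_sqrt]; positivity
  have hk2 : ∑ i, k i ^ 2 = r ^ 2 := by
    rw [← hk, Real.sq_sqrt]; positivity
  have hrow : C ^ 2 * ∫ g, ∏ i, h i (g i) ∂ν = rexp (r ^ 2) * rexp (∑ i, q i * k i) := by
    rw [hν, integral_pi_prod]
    simp_rw [hone]
    rw [Finset.prod_mul_distrib, Finset.prod_const, ← Real.exp_sum, Finset.card_univ,
      Fintype.card_fin]
    have hCC : C ^ 2 * ((1 - 4*A) ^ (-(1:ℝ)/2)) ^ d = 1 := by
      rw [hC, ← Real.rpow_natCast ((1 - 4*A) ^ ((d:ℝ)/4)) 2, ← Real.rpow_mul hB.le,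
        ← Real.rpow_natCast ((1 - 4*A) ^ (-(1:ℝ)/2)) d, ← Real.rpow_mul hB.le,
        ← Real.rpow_add hB]
      rw [show (d:ℝ)/4 * ((2:ℕ):ℝ) + (-(1:ℝ)/2) * ((d:ℕ):ℝ) = 0 by push_cast; ring,
        Real.rpow_zero]
    have hsum2 : ∑ i, (q i + k i) ^ 2 / 2 = r ^ 2 + ∑ i, q i * k i := by
      rw [← Finset.sum_div]
      have e2 : ∑ i, (q i + k i) ^ 2
          = (∑ i, q i ^ 2) + (∑ i, k i ^ 2) + 2 * ∑ i, q i * k i := by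
        rw [Finset.mul_sum, ← Finset.sum_add_distrib, ← Finset.sum_add_distrib]
        exact Finset.sum_congr rfl fun i _ => by ring
      rw [e2, hq2, hk2]; ring
    rw [← mul_assoc, hCC, one_mul, hsum2, Real.exp_add]
  -- put it together
  rw [integral_div]
  have hmain : ∫ G, (∑ l : Fin m,
      ((C * rexp (A * ∑ i, (G l i) ^ 2)) * rexp (s * ∑ i, G l i * q i))
        * ((C * rexp (A * ∑ i, (G l i) ^ 2)) * rexp (s * ∑ i, G l i * k i)))
      ∂(gaussianMatrix m d)
      = m * (rexp (r ^ 2) * rexp (∑ i, q i * k i)) := by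
    haveI := hPν
    have step1 : ∀ l : Fin m,
        ∫ G, C ^ 2 * ∏ i, h i (G l i) ∂(gaussianMatrix m d)
          = C ^ 2 * ∫ g, ∏ i, h i (g i) ∂ν := by
      intro l
      set F : Fin m → (Fin d → ℝ) → ℝ :=
        fun l' g => if l = l' then ∏ i, h i (g i) else 1 with hFdef
      have hF : (fun G : Fin m → Fin d → ℝ => ∏ i, h i (G l i))
          = fun G => ∏ l' : Fin m, F l' (G l') := by
        funext G
        rw [hFdef]
        simp [Finset.prod_ite_eq]
      rw [integral_const_mul]
      congr 1
      rw [show gaussianMatrix m d = Measure.pi (fun _ : Fin m => ν) from rfl, hF,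
        integral_pi_prod ν F]
      rw [Finset.prod_eq_single l (fun b _ hb => by
          simp only [hFdef, if_neg (Ne.symm hb)]
          simp) (by simp)]
      simp [hFdef]
    have hintRow : ∀ l : Fin m, Integrable
        (fun G : Fin m → Fin d → ℝ => C ^ 2 * ∏ i, h i (G l i)) (gaussianMatrix m d) := by
      intro l
      refine Integrable.const_mul ?_ _
      set F : Fin m → (Fin d → ℝ) → ℝ :=
        fun l' g => if l = l' then ∏ i, h i (g i) else 1 with hFdef
      have hF : (fun G : Fin m → Fin d → ℝ => ∏ i, h i (G l i))
          = fun G => ∏ l' : Fin m, F l' (G l') := by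
        funext G
        rw [hFdef]
        simp [Finset.prod_ite_eq]
      rw [show gaussianMatrix m d = Measure.pi (fun _ : Fin m => ν) from rfl, hF]
      refine integrable_pi_prod (μ := ν) fun l' => ?_
      rw [hFdef]
      by_cases hll : l = l' <;> simp [hll, hrowInt, integrable_const]
    calc ∫ G, (∑ l : Fin m,
        ((C * rexp (A * ∑ i, (G l i) ^ 2)) * rexp (s * ∑ i, G l i * q i))
        * ((C * rexp (A * ∑ i, (G l i) ^ 2)) * rexp (s * ∑ i, G l i * k i)))
        ∂(gaussianMatrix m d)
        = ∫ G, (∑ l : Fin m, C ^ 2 * ∏ i, h i (G l i)) ∂(gaussianMatrix m d) := by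
          apply integral_congr_ae
          exact Filter.Eventually.of_forall fun G => Finset.sum_congr rfl fun l _ => key G l
      _ = ∑ l : Fin m, ∫ G, C ^ 2 * ∏ i, h i (G l i) ∂(gaussianMatrix m d) :=
          integral_finset_sum _ fun l _ => hintRow l
      _ = ∑ l : Fin m, (C ^ 2 * ∫ g, ∏ i, h i (g i) ∂ν) :=
          Finset.sum_congr rfl fun l _ => step1 l
      _ = m * (rexp (r ^ 2) * rexp (∑ i, q i * k i)) := by
          rw [Finset.sum_const, Finset.card_univ, Fintype.card_fin, nsmul_eq_mul, hrow]
  rw [hmain]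
  have hm0 : (m:ℝ) ≠ 0 := Nat.cast_ne_zero.mpr (by omega)
  field_simp
end
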